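/- Combining Theorem 2 with Theorem 1: under Assumption A, L-Lipschitz gradient of L, the optimal stationarity condition of ℓ, and either learning-rate schedule (i) ζ ≤ ε^{(r)} ≤ c̲(2−ζ)/(L c̄) or (ii) ε^{(r)} → 0 with Σ ε^{(r)} = ∞, any limit point θ of the iterate sequence {θ^{(r)}} at which rank(∂û_X(θ)/∂θ) = N D_u is a global minimum of L. -/

import Mathlib

open Filter InnerProductSpace
open scoped BigOperators

set_option maxHeartbeats 1000000

noncomputable section

variable {P : Type*} [NormedAddCommGroup P] [InnerProductSpace ℝ P] [CompleteSpace P]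

lemma fderiv_apply_eq_inner_gradient (f : P → ℝ) (x v : P) :
    fderiv ℝ f x v = (inner ℝ (gradient f x) v : ℝ) := by
  rw [gradient, ← InnerProductSpace.toDual_apply_apply,
    LinearIsometryEquiv.apply_symm_apply]

lemma lipschitz_fderiv_of_lipschitz_gradient (f : P → ℝ) (Lc : ℝ)
    (hlip : ∀ x y, ‖gradient f x - gradient f y‖ ≤ Lc * ‖x - y‖) (x y : P) :
    ‖fderiv ℝ f x - fderiv ℝ f y‖ ≤ Lc * ‖x - y‖ := by
  have h : fderiv ℝ f x - fderiv ℝ f y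
      = toDual ℝ P (gradient f x - gradient f y) := by
    rw [map_sub, gradient, gradient, LinearIsometryEquiv.apply_symm_apply,
      LinearIsometryEquiv.apply_symm_apply]
  rw [h, LinearIsometryEquiv.norm_map]
  exact hlip x y

lemma continuous_fderiv_of_lipschitz_gradient (f : P → ℝ) (Lc : ℝ) (hLc : 0 ≤ Lc)
    (hlip : ∀ x y, ‖gradient f x - gradient f y‖ ≤ Lc * ‖x - y‖) :
    Continuous (fderiv ℝ f) := by
  rcases eq_or_lt_of_le hLc with h | h
  · have hconst : ∀ a, fderiv ℝ f a = fderiv ℝ f 0 := by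
      intro a
      have h2 := lipschitz_fderiv_of_lipschitz_gradient f Lc hlip a 0
      rw [← h, zero_mul] at h2
      rwa [norm_le_zero_iff, sub_eq_zero] at h2
    have : fderiv ℝ f = fun _ => fderiv ℝ f 0 := funext hconst
    rw [this]; exact continuous_const
  · refine (LipschitzWith.of_dist_le_mul (K := Lc.toNNReal) ?_).continuous
    intro a b
    rw [dist_eq_norm, dist_eq_norm]
    simpa [Real.coe_toNNReal _ h.le] using
      lipschitz_fderiv_of_lipschitz_gradient f Lc hlip a b

/-- The descent lemma. -/
lemma descent_lemma (f : P → ℝ) (hf : Differentiable ℝ f) (Lc : ℝ) (hLc : 0 ≤ Lc)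
    (hlip : ∀ x y, ‖gradient f x - gradient f y‖ ≤ Lc * ‖x - y‖) (x y : P) :
    f y ≤ f x + (inner ℝ (gradient f x) (y - x) : ℝ) + Lc / 2 * ‖y - x‖ ^ 2 := by
  set p : ℝ → P := fun t => x + t • (y - x) with hp
  set ψ : ℝ → ℝ := fun t => fderiv ℝ f (p t) (y - x) with hψ
  have hpderiv : ∀ t : ℝ, HasDerivAt p (y - x) t := by
    intro t
    have h1 : HasDerivAt (fun s : ℝ => s • (y - x)) ((1 : ℝ) • (y - x)) t :=
      (hasDerivAt_id t).smul_const (y - x)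
    simpa [hp] using h1.const_add x
  have hderiv : ∀ t : ℝ, HasDerivAt (fun s => f (p s)) (ψ t) t := by
    intro t
    exact (hf (p t)).hasFDerivAt.comp_hasDerivAt t (hpderiv t)
  have hfcont : Continuous (fderiv ℝ f) :=
    continuous_fderiv_of_lipschitz_gradient f Lc hLc hlip
  have hψcont : Continuous ψ := by
    have hpc : Continuous p :=
      continuous_const.add (continuous_id.smul continuous_const)
    exact (hfcont.comp hpc).clm_apply continuous_const
  have hint := intervalIntegral.integral_eq_sub_of_hasDerivAt
    (f := fun s => f (p s)) (f' := ψ) (a := (0:ℝ)) (b := 1)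
    (fun t _ => hderiv t) (hψcont.intervalIntegrable 0 1)
  have hp0 : p 0 = x := by simp [hp]
  have hp1 : p 1 = y := by simp [hp]
  beta_reduce at hint
  rw [hp0, hp1] at hint
  have hbound : ∀ t ∈ Set.Icc (0:ℝ) 1, ψ t ≤ ψ 0 + Lc * ‖y - x‖ ^ 2 * t := by
    intro t ht
    have h1 : ψ t - ψ 0 = (fderiv ℝ f (p t) - fderiv ℝ f (p 0)) (y - x) := by
      simp [hψ, ContinuousLinearMap.sub_apply]
    have h2 : ψ t - ψ 0 ≤ ‖fderiv ℝ f (p t) - fderiv ℝ f (p 0)‖ * ‖y - x‖ := by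
      rw [h1]
      calc (fderiv ℝ f (p t) - fderiv ℝ f (p 0)) (y - x)
          ≤ ‖(fderiv ℝ f (p t) - fderiv ℝ f (p 0)) (y - x)‖ := by
            rw [Real.norm_eq_abs]; exact le_abs_self _
        _ ≤ ‖fderiv ℝ f (p t) - fderiv ℝ f (p 0)‖ * ‖y - x‖ :=
            ContinuousLinearMap.le_opNorm _ _
    have h3 : ‖fderiv ℝ f (p t) - fderiv ℝ f (p 0)‖ ≤ Lc * (t * ‖y - x‖) := by
      have hh := lipschitz_fderiv_of_lipschitz_gradient f Lc hlip (p t) (p 0)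
      have hpt : p t - p 0 = t • (y - x) := by simp [hp]
      rw [hpt, norm_smul, Real.norm_eq_abs, abs_of_nonneg ht.1] at hh
      exact hh
    nlinarith [norm_nonneg (y - x), ht.1,
      mul_le_mul_of_nonneg_right h3 (norm_nonneg (y - x))]
  have hcont2 : Continuous fun t : ℝ => ψ 0 + Lc * ‖y - x‖ ^ 2 * t :=
    continuous_const.add (continuous_const.mul continuous_id')
  have hmono : ∫ t in (0:ℝ)..1, ψ t
      ≤ ∫ t in (0:ℝ)..1, (ψ 0 + Lc * ‖y - x‖ ^ 2 * t) := by
    apply intervalIntegral.integral_mono_on (by norm_num)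
      (hψcont.intervalIntegrable 0 1) (hcont2.intervalIntegrable 0 1)
    exact hbound
  have hrhs : ∫ t in (0:ℝ)..1, (ψ 0 + Lc * ‖y - x‖ ^ 2 * t)
      = ψ 0 + Lc * ‖y - x‖ ^ 2 / 2 := by
    rw [intervalIntegral.integral_add (f := fun _ : ℝ => ψ 0) (g := fun t : ℝ => Lc * ‖y - x‖ ^ 2 * t)
        ((continuous_const (y := ψ 0)).intervalIntegrable 0 1)
        ((continuous_const.mul continuous_id').intervalIntegrable 0 1),
      intervalIntegral.integral_const, intervalIntegral.integral_const_mul,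
      integral_id]
    norm_num
    ring
  have hψ0 : ψ 0 = (inner ℝ (gradient f x) (y - x) : ℝ) := by
    rw [hψ]; simp only [hp0]
    rw [fderiv_apply_eq_inner_gradient]
  rw [hint, hrhs, hψ0] at hmono
  linarith

lemma stationary_limit (L : P → ℝ) (hLdiff : Differentiable ℝ L) (hLnonneg : ∀ θ, 0 ≤ L θ)
    (Lc : ℝ) (hLc : 0 < Lc)
    (hlip : ∀ θ θ', ‖gradient L θ - gradient L θ'‖ ≤ Lc * ‖θ - θ'‖)
    (θseq gseq : ℕ → P) (ε : ℕ → ℝ)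
    (cl cu : ℝ) (hcl : 0 < cl) (hcu : 0 < cu)
    (hA1 : ∀ r, cl * ‖gradient L (θseq r)‖ ^ 2 ≤ (inner ℝ (gradient L (θseq r)) (gseq r) : ℝ))
    (hA2 : ∀ r, ‖gseq r‖ ^ 2 ≤ cu * ‖gradient L (θseq r)‖ ^ 2)
    (hupd : ∀ r, θseq (r + 1) = θseq r - ε r • gseq r)
    (hεpos : ∀ r, 0 ≤ ε r)
    (R0 : ℕ) (α : ℝ) (hα : 0 < α)
    (hdampen : ∀ r, R0 ≤ r → Lc * cu / 2 * ε r ≤ cl - α)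
    (hdiv : Tendsto (fun n => ∑ r ∈ Finset.range n, ε r) atTop atTop)
    (θlim : P) (φ : ℕ → ℕ) (hφ : StrictMono φ)
    (hconv : Tendsto (fun k => θseq (φ k)) atTop (nhds θlim)) :
    gradient L θlim = 0 := by
  set nr : ℕ → ℝ := fun r => ‖gradient L (θseq r)‖ with hnr
  have hnrpos : ∀ r, 0 ≤ nr r := fun r => norm_nonneg _
  -- Step 1 : descent recursion
  have hstep : ∀ r, R0 ≤ r → L (θseq (r + 1)) ≤ L (θseq r) - α * (ε r * nr r ^ 2) := by
    intro r hr
    have hdes := descent_lemma L hLdiff Lc hLc.le hlip (θseq r) (θseq (r + 1))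
    have hdiff : θseq (r + 1) - θseq r = -(ε r • gseq r) := by rw [hupd r]; abel
    have hinner : (inner ℝ (gradient L (θseq r)) (θseq (r + 1) - θseq r) : ℝ)
        = -(ε r * (inner ℝ (gradient L (θseq r)) (gseq r) : ℝ)) := by
      rw [hdiff, inner_neg_right, real_inner_smul_right]
    have hnorm2 : ‖θseq (r + 1) - θseq r‖ ^ 2 ≤ ε r ^ 2 * (cu * nr r ^ 2) := by
      rw [hdiff, norm_neg, norm_smul, Real.norm_eq_abs, abs_of_nonneg (hεpos r), mul_pow]
      exact mul_le_mul_of_nonneg_left (hA2 r) (by positivity)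
    have e1 : ε r * (cl * nr r ^ 2) ≤ ε r * (inner ℝ (gradient L (θseq r)) (gseq r) : ℝ) :=
      mul_le_mul_of_nonneg_left (hA1 r) (hεpos r)
    have e2 : Lc / 2 * ‖θseq (r + 1) - θseq r‖ ^ 2 ≤ Lc / 2 * (ε r ^ 2 * (cu * nr r ^ 2)) :=
      mul_le_mul_of_nonneg_left hnorm2 (by positivity)
    have e3 : Lc * cu / 2 * ε r * (ε r * nr r ^ 2) ≤ (cl - α) * (ε r * nr r ^ 2) :=
      mul_le_mul_of_nonneg_right (hdampen r hr) (mul_nonneg (hεpos r) (sq_nonneg _))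
    nlinarith [hdes, hinner, e1, e2, e3]
  -- Step 2 : tail sums are bounded
  set T : ℕ → ℝ := fun n => ∑ r ∈ Finset.Ico R0 n, ε r * nr r ^ 2 with hT
  have hTmono : Monotone T := by
    intro a b hab
    exact Finset.sum_le_sum_of_subset_of_nonneg (Finset.Ico_subset_Ico le_rfl hab)
      (fun i _ _ => mul_nonneg (hεpos i) (sq_nonneg _))
  have hkey : ∀ n, R0 ≤ n → L (θseq n) + α * T n ≤ L (θseq R0) := by
    intro n hn
    induction n, hn using Nat.le_induction with
    | base => simp [hT]
    | succ n hn ih =>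
      have hTsucc : T (n + 1) = T n + ε n * nr n ^ 2 := Finset.sum_Ico_succ_top hn _
      have := hstep n hn
      rw [hTsucc]
      nlinarith [this, ih]
      
  have hTbound : ∀ n, T n ≤ L (θseq R0) / α := by
    intro n
    rcases le_or_gt n R0 with h | h
    · have : T n = 0 := by
        rw [hT]; simp [Finset.Ico_eq_empty_iff.2 (by omega : ¬ R0 < n)]
      rw [this]
      exact div_nonneg (hLnonneg _) hα.le
    · have := hkey n h.le
      rw [le_div_iff₀ hα, mul_comm]
      linarith [hLnonneg (θseq n)]
  have hTbdd : BddAbove (Set.range T) := by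
    refine ⟨L (θseq R0) / α, ?_⟩
    rintro _ ⟨n, rfl⟩
    exact hTbound n
  set S := ⨆ n, T n with hS
  have hTtend : Tendsto T atTop (nhds S) := tendsto_atTop_ciSup hTmono hTbdd
  have htail : ∀ η : ℝ, 0 < η → ∃ M, R0 ≤ M ∧ ∀ m n, M ≤ m → m ≤ n →
      ∑ r ∈ Finset.Ico m n, ε r * nr r ^ 2 < η := by
    intro η hη
    have hev : ∀ᶠ m in atTop, S - η < T m :=
      hTtend.eventually (eventually_gt_nhds (by linarith))
    obtain ⟨M0, hM0⟩ := eventually_atTop.1 hev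
    refine ⟨max M0 R0, le_max_right _ _, ?_⟩
    intro m n hm hmn
    have hmR0 : R0 ≤ m := le_trans (le_max_right _ _) hm
    have hsplit : T m + ∑ r ∈ Finset.Ico m n, ε r * nr r ^ 2 = T n :=
      Finset.sum_Ico_consecutive _ hmR0 hmn
    have hTn : T n ≤ S := le_ciSup hTbdd n
    have hTm : S - η < T m := hM0 m (le_trans (le_max_left _ _) hm)
    linarith
  -- Step 3 : contradiction setup
  by_contra hne
  have hδ : 0 < ‖gradient L θlim‖ := norm_pos_iff.2 hne
  set δ := ‖gradient L θlim‖ with hδdef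
  have hgcont : Continuous (gradient L) := by
    refine (LipschitzWith.of_dist_le_mul (K := Lc.toNNReal) ?_).continuous
    intro a b
    rw [dist_eq_norm, dist_eq_norm]
    simpa [Real.coe_toNNReal _ hLc.le] using hlip a b
  have hnormconv : Tendsto (fun k => nr (φ k)) atTop (nhds δ) :=
    (((hgcont.tendsto θlim).comp hconv).norm)
  have hev2 : ∀ᶠ k in atTop, 3 / 4 * δ < nr (φ k) :=
    hnormconv.eventually (eventually_gt_nhds (by linarith))
  set sq := Real.sqrt cu with hsqdef
  have hsq : 0 < sq := Real.sqrt_pos.2 hcu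
  have hsq2 : sq ^ 2 = cu := Real.sq_sqrt hcu.le
  set η := δ ^ 2 / (16 * Lc * sq) with hηdef
  have hηpos : 0 < η := by positivity
  obtain ⟨M, hMR0, hM⟩ := htail η hηpos
  obtain ⟨K, hK⟩ := eventually_atTop.1 hev2
  set k := max K M with hk
  set m := φ k with hm
  have hm_big : 3 / 4 * δ < nr m := hK k (le_max_left _ _)
  have hmM : M ≤ m := le_trans (le_max_right K M) hφ.le_apply
  have hmR0 : R0 ≤ m := hMR0.trans hmM
  -- existence of a later small gradient
  have hexists : ∃ j : ℕ, nr (m + j) < δ / 2 := by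
    by_contra hno
    push_neg at hno
    have hbd : ∀ n, ∑ r ∈ Finset.range n, ε r
        ≤ ∑ r ∈ Finset.range m, ε r + 4 / δ ^ 2 * (L (θseq R0) / α) := by
      intro n
      have hLα : 0 ≤ L (θseq R0) / α := div_nonneg (hLnonneg _) hα.le
      rcases le_or_gt n m with h | h
      · have h1 : ∑ r ∈ Finset.range n, ε r ≤ ∑ r ∈ Finset.range m, ε r :=
          Finset.sum_le_sum_of_subset_of_nonneg (Finset.range_subset_range.2 h)
            (fun i _ _ => hεpos i)
        have h2 : 0 ≤ 4 / δ ^ 2 * (L (θseq R0) / α) := mul_nonneg (by positivity) hLα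
        linarith
      · have hsplit : ∑ r ∈ Finset.range n, ε r
            = ∑ r ∈ Finset.range m, ε r + ∑ r ∈ Finset.Ico m n, ε r :=
          (Finset.sum_range_add_sum_Ico _ h.le).symm
        have h2 : ∑ r ∈ Finset.Ico m n, ε r
            ≤ 4 / δ ^ 2 * ∑ r ∈ Finset.Ico m n, ε r * nr r ^ 2 := by
          rw [Finset.mul_sum]
          apply Finset.sum_le_sum
          intro i hi
          have hi' : m ≤ i := (Finset.mem_Ico.1 hi).1
          have hni : δ / 2 ≤ nr i := by
            obtain ⟨j, rfl⟩ := Nat.exists_eq_add_of_le hi'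
            exact hno j
          have h4 : δ ^ 2 / 4 ≤ nr i ^ 2 := by nlinarith
          have h5 : ε i * (δ ^ 2 / 4) ≤ ε i * nr i ^ 2 :=
            mul_le_mul_of_nonneg_left h4 (hεpos i)
          rw [div_mul_eq_mul_div, le_div_iff₀ (by positivity : (0:ℝ) < δ ^ 2)]
          nlinarith
        have h3 : ∑ r ∈ Finset.Ico m n, ε r * nr r ^ 2 ≤ L (θseq R0) / α := by
          refine le_trans ?_ (hTbound n)
          exact Finset.sum_le_sum_of_subset_of_nonneg
            (Finset.Ico_subset_Ico hmR0 le_rfl) (fun i _ _ => mul_nonneg (hεpos i) (sq_nonneg _))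
        have h6 : 4 / δ ^ 2 * ∑ r ∈ Finset.Ico m n, ε r * nr r ^ 2
            ≤ 4 / δ ^ 2 * (L (θseq R0) / α) :=
          mul_le_mul_of_nonneg_left h3 (by positivity)
        
        linarith
    obtain ⟨n, hn⟩ := (hdiv.eventually
      (eventually_gt_atTop (∑ r ∈ Finset.range m, ε r
        + 4 / δ ^ 2 * (L (θseq R0) / α)))).exists
    exact absurd (hbd n) (not_le.2 hn)
  set j0 := Nat.find hexists with hj0
  set rstar := m + j0 with hrstar
  have hsmall : nr rstar < δ / 2 := Nat.find_spec hexists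
  have hbigr : ∀ r, m ≤ r → r < rstar → δ / 2 ≤ nr r := by
    intro r hr hrlt
    obtain ⟨j, rfl⟩ := Nat.exists_eq_add_of_le hr
    have : j < j0 := by omega
    exact not_lt.1 (Nat.find_min hexists this)
  -- movement bound
  have hstepnorm : ∀ r : ℕ, ‖θseq (r + 1) - θseq r‖ = ε r * ‖gseq r‖ := by
    intro r
    have : θseq (r + 1) - θseq r = -(ε r • gseq r) := by rw [hupd r]; abel
    rw [this, norm_neg, norm_smul, Real.norm_eq_abs, abs_of_nonneg (hεpos r)]
  have hmove : ∀ n, m ≤ n → ‖θseq n - θseq m‖ ≤ ∑ r ∈ Finset.Ico m n, ε r * ‖gseq r‖ := by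
    intro n hn
    induction n, hn using Nat.le_induction with
    | base => simp
    | succ n hn ih =>
      rw [Finset.sum_Ico_succ_top hn]
      have hdec : θseq (n + 1) - θseq m = (θseq n - θseq m) + (θseq (n + 1) - θseq n) := by
        abel
      rw [hdec]
      refine (norm_add_le _ _).trans ?_
      rw [hstepnorm n]
      linarith
  have hstep2 : ∀ r, m ≤ r → r < rstar →
      ε r * ‖gseq r‖ ≤ 2 * sq / δ * (ε r * nr r ^ 2) := by
    intro r h1 h2
    have hg : ‖gseq r‖ ≤ sq * nr r := by
      have h4 : ‖gseq r‖ ^ 2 ≤ (sq * nr r) ^ 2 := by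
        rw [mul_pow, hsq2]; exact hA2 r
      have := Real.sqrt_le_sqrt h4
      rwa [Real.sqrt_sq (norm_nonneg _), Real.sqrt_sq (by positivity)] at this
    have hb := hbigr r h1 h2
    have hεg : ε r * ‖gseq r‖ ≤ ε r * (sq * nr r) :=
      mul_le_mul_of_nonneg_left hg (hεpos r)
    have hnr1 : nr r * δ ≤ 2 * nr r ^ 2 := by nlinarith [hnrpos r]
    have e1 : ε r * ‖gseq r‖ * δ ≤ ε r * (sq * nr r) * δ :=
      mul_le_mul_of_nonneg_right hεg hδ.le
    have e2 : ε r * sq * (nr r * δ) ≤ ε r * sq * (2 * nr r ^ 2) :=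
      mul_le_mul_of_nonneg_left hnr1 (mul_nonneg (hεpos r) hsq.le)
    rw [div_mul_eq_mul_div, le_div_iff₀ hδ]
    linarith [e1, e2]
  have htailb : ∑ r ∈ Finset.Ico m rstar, ε r * nr r ^ 2 < η :=
    hM m rstar hmM (Nat.le_add_right _ _)
  have htailnn : 0 ≤ ∑ r ∈ Finset.Ico m rstar, ε r * nr r ^ 2 :=
    Finset.sum_nonneg fun i _ => mul_nonneg (hεpos i) (sq_nonneg _)
  have hmove2 : ‖θseq rstar - θseq m‖ ≤ 2 * sq / δ * η := by
    refine (hmove rstar (Nat.le_add_right _ _)).trans ?_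
    calc ∑ r ∈ Finset.Ico m rstar, ε r * ‖gseq r‖
        ≤ ∑ r ∈ Finset.Ico m rstar, 2 * sq / δ * (ε r * nr r ^ 2) := by
          refine Finset.sum_le_sum fun i hi => ?_
          obtain ⟨hi1, hi2⟩ := Finset.mem_Ico.1 hi
          exact hstep2 i hi1 hi2
      _ = 2 * sq / δ * ∑ r ∈ Finset.Ico m rstar, ε r * nr r ^ 2 := by
          rw [Finset.mul_sum]
      _ ≤ 2 * sq / δ * η :=
          mul_le_mul_of_nonneg_left htailb.le (by positivity)
  -- final contradiction
  have hlip2 := hlip (θseq m) (θseq rstar)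
  have h5 : nr m - nr rstar ≤ ‖gradient L (θseq m) - gradient L (θseq rstar)‖ :=
    norm_sub_norm_le _ _
  have h6 : ‖θseq m - θseq rstar‖ = ‖θseq rstar - θseq m‖ := norm_sub_rev _ _
  have h7 : Lc * ‖θseq m - θseq rstar‖ ≤ Lc * (2 * sq / δ * η) := by
    rw [h6]
    exact mul_le_mul_of_nonneg_left hmove2 hLc.le
  have hcalc : Lc * (2 * sq / δ * η) = δ / 8 := by
    rw [hηdef]
    field_simp
    ring
  rw [hcalc] at h7
  linarith [hm_big, hsmall, h5, hlip2, h7, hδ]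

/-- A nonnegative differentiable function whose gradient is `0`-Lipschitz (hence constant)
has vanishing gradient everywhere. -/
lemma gradient_eq_zero_of_lipschitz_zero (L : P → ℝ) (hLdiff : Differentiable ℝ L)
    (hLnonneg : ∀ θ, 0 ≤ L θ)
    (hlip : ∀ θ θ', ‖gradient L θ - gradient L θ'‖ ≤ 0 * ‖θ - θ'‖) (θ₀ : P) :
    gradient L θ₀ = 0 := by
  have hconst : ∀ θ, gradient L θ = gradient L 0 := by
    intro θ
    have h2 := hlip θ 0
    rw [zero_mul] at h2
    rwa [norm_le_zero_iff, sub_eq_zero] at h2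
  set c := gradient L 0 with hc
  have hkey : ∀ θ, L θ = L 0 + (inner ℝ c θ : ℝ) := by
    have hder : ∀ θ : P, HasFDerivAt (fun θ' => L θ' - (inner ℝ c θ' : ℝ)) (0 : P →L[ℝ] ℝ) θ := by
      intro θ
      have h1 : HasFDerivAt L (toDual ℝ P c) θ := by
        have := (hLdiff θ).hasGradientAt
        rw [hconst θ] at this
        rwa [hasGradientAt_iff_hasFDerivAt] at this
      have h2 : HasFDerivAt (fun θ' : P => (inner ℝ c θ' : ℝ)) (toDual ℝ P c) θ := by
        have h3 : HasFDerivAt (toDual ℝ P c) (toDual ℝ P c) θ :=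
          (toDual ℝ P c).hasFDerivAt
        have h4 : ⇑(toDual ℝ P c) = fun θ' : P => (inner ℝ c θ' : ℝ) := by
          funext θ'
          simp [InnerProductSpace.toDual_apply_apply]
        rwa [h4] at h3
      have h5 := h1.sub h2
      rw [sub_self] at h5
      exact h5
    intro θ
    have hcm := is_const_of_fderiv_eq_zero (𝕜 := ℝ)
      (f := fun θ' : P => L θ' - (inner ℝ c θ' : ℝ))
      (fun x => (hder x).differentiableAt) (fun x => (hder x).fderiv) θ 0
    simp only [inner_zero_right, sub_zero] at hcm
    linarith [hcm]
  have hc0 : c = 0 := by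
    by_contra hne
    have hcpos : 0 < ‖c‖ ^ 2 := pow_pos (norm_pos_iff.mpr hne) 2
    have := hLnonneg (-(((L 0 + 1) / ‖c‖ ^ 2) • c))
    rw [hkey] at this
    rw [inner_neg_right, real_inner_smul_right, real_inner_self_eq_norm_sq] at this
    have heq : (L 0 + 1) / ‖c‖ ^ 2 * ‖c‖ ^ 2 = L 0 + 1 := by
      field_simp
    rw [heq] at this
    linarith
  exact (hconst θ₀).trans hc0

/-- Combining Theorems 1 and 2: under Assumption A, Lipschitz gradient of
`L`, the optimal stationarity condition of `ℓ`, and either learning-rate schedule (i)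
`ζ ≤ εᵣ ≤ c̲(2−ζ)/(Lc·c̄)` or (ii) `εᵣ → 0` with `Σ εᵣ = ∞`, any limit point `θlim` of the
iterate sequence at which the Jacobian of the stacked output map has full row rank `N·Du`
is a global minimum of `L`. -/
theorem limit_point_is_global_min
    {Du N Dθ : ℕ} (hN : 0 < N)
    (U : Set (EuclideanSpace ℝ (Fin Du)))
    (ℓ : EuclideanSpace ℝ (Fin Du) → EuclideanSpace ℝ (Fin Du) → ℝ)
    (u : Fin N → EuclideanSpace ℝ (Fin Du)) (hu : ∀ i, u i ∈ U)
    (model : EuclideanSpace ℝ (Fin Dθ) → Fin N → EuclideanSpace ℝ (Fin Du))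
    (hmodel : ∀ i, Differentiable ℝ fun θ => model θ i)
    (hosc : ∀ v ∈ U, ∀ q : EuclideanSpace ℝ (Fin Du),
      DifferentiableAt ℝ (fun p => ℓ p v) q ∧
        (gradient (fun p => ℓ p v) q = 0 → ∀ q', ℓ q v ≤ ℓ q' v))
    (L : EuclideanSpace ℝ (Fin Dθ) → ℝ)
    (hL : L = fun θ => (1 / (N : ℝ)) * ∑ i, ℓ (model θ i) (u i))
    (hLdiff : Differentiable ℝ L) (hLnonneg : ∀ θ, 0 ≤ L θ)
    (Lc : ℝ) (hLc : 0 ≤ Lc)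
    (hlip : ∀ θ θ', ‖gradient L θ - gradient L θ'‖ ≤ Lc * ‖θ - θ'‖)
    (θseq gseq : ℕ → EuclideanSpace ℝ (Fin Dθ)) (ε : ℕ → ℝ)
    (cl cu : ℝ) (hcl : 0 < cl) (hcu : 0 < cu)
    (hA1 : ∀ r, cl * ‖gradient L (θseq r)‖ ^ 2 ≤ (inner ℝ (gradient L (θseq r)) (gseq r) : ℝ))
    (hA2 : ∀ r, ‖gseq r‖ ^ 2 ≤ cu * ‖gradient L (θseq r)‖ ^ 2)
    (hupd : ∀ r, θseq (r + 1) = θseq r - ε r • gseq r)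
    (hεpos : ∀ r, 0 ≤ ε r)
    (hrate :
      (∃ ζ : ℝ, 0 < ζ ∧ ∀ r, ζ ≤ ε r ∧ ε r ≤ cl * (2 - ζ) / (Lc * cu)) ∨
      (Tendsto ε atTop (nhds 0) ∧
        Tendsto (fun n => ∑ r ∈ Finset.range n, ε r) atTop atTop))
    (θlim : EuclideanSpace ℝ (Fin Dθ))
    (hlimpt : ∃ φ : ℕ → ℕ, StrictMono φ ∧
      Tendsto (fun k => θseq (φ k)) atTop (nhds θlim))
    (hrank : LinearMap.rank
        (fderiv ℝ (fun θ' => (fun i => model θ' i)) θlim).toLinearMap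
        = ((N * Du : ℕ) : Cardinal)) :
    ∀ θ', L θlim ≤ L θ' := by
  obtain ⟨φ, hφ, hconv⟩ := hlimpt
  -- Step A : vanishing gradient at the limit point
  have hgrad0 : gradient L θlim = 0 := by
    rcases eq_or_lt_of_le hLc with hLc0 | hLcpos
    · exact gradient_eq_zero_of_lipschitz_zero L hLdiff hLnonneg (hLc0 ▸ hlip) θlim
    · -- produce damping constants
      obtain ⟨R0, α, hα, hdampen, hdiv⟩ :
          ∃ (R0 : ℕ) (α : ℝ), 0 < α ∧ (∀ r, R0 ≤ r → Lc * cu / 2 * ε r ≤ cl - α) ∧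
            Tendsto (fun n => ∑ r ∈ Finset.range n, ε r) atTop atTop := by
        rcases hrate with ⟨ζ, hζ, hζ2⟩ | ⟨h0, hdiv⟩
        · refine ⟨0, cl * ζ / 2, by positivity, ?_, ?_⟩
          · intro r _
            have h1 : Lc * cu / 2 * ε r ≤ Lc * cu / 2 * (cl * (2 - ζ) / (Lc * cu)) :=
              mul_le_mul_of_nonneg_left (hζ2 r).2 (by positivity)
            have h2 : Lc * cu / 2 * (cl * (2 - ζ) / (Lc * cu)) = cl - cl * ζ / 2 := by
              field_simp
            linarith
          · have hle : ∀ n : ℕ, (n : ℝ) * ζ ≤ ∑ r ∈ Finset.range n, ε r := by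
              intro n
              calc (n : ℝ) * ζ = ∑ _r ∈ Finset.range n, ζ := by
                    simp [Finset.sum_const, Finset.card_range, mul_comm]
                _ ≤ ∑ r ∈ Finset.range n, ε r :=
                    Finset.sum_le_sum fun i _ => (hζ2 i).1
            exact tendsto_atTop_mono hle
              (Tendsto.atTop_mul_const hζ tendsto_natCast_atTop_atTop)
        · have hev : ∀ᶠ r in atTop, ε r < cl / (Lc * cu) :=
            h0.eventually (eventually_lt_nhds (by positivity))
          obtain ⟨R0, hR0⟩ := eventually_atTop.1 hev
          refine ⟨R0, cl / 2, by positivity, ?_, hdiv⟩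
          intro r hr
          have h1 : Lc * cu / 2 * ε r ≤ Lc * cu / 2 * (cl / (Lc * cu)) :=
            mul_le_mul_of_nonneg_left (hR0 r hr).le (by positivity)
          have h2 : Lc * cu / 2 * (cl / (Lc * cu)) = cl - cl / 2 := by
            field_simp
            ring
          linarith
      exact stationary_limit L hLdiff hLnonneg Lc hLcpos hlip θseq gseq ε cl cu hcl hcu
        hA1 hA2 hupd hεpos R0 α hα hdampen hdiv θlim φ hφ hconv
  -- Step B : Theorem 1, stationarity + full rank ⇒ global optimality
  set G : Fin N → EuclideanSpace ℝ (Fin Du) :=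
    fun i => gradient (fun p => ℓ p (u i)) (model θlim i) with hG
  set D : Fin N → (EuclideanSpace ℝ (Fin Dθ) →L[ℝ] EuclideanSpace ℝ (Fin Du)) :=
    fun i => fderiv ℝ (fun θ => model θ i) θlim with hD
  have hfd0 : fderiv ℝ L θlim = 0 := by
    have h1 := (hLdiff θlim).hasGradientAt
    rw [hgrad0, hasGradientAt_iff_hasFDerivAt] at h1
    rw [h1.fderiv]
    simp
  have hterm : ∀ i, HasFDerivAt (fun θ => ℓ (model θ i) (u i))
      ((toDual ℝ (EuclideanSpace ℝ (Fin Du)) (G i)).comp (D i)) θlim := by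
    intro i
    have h1 : HasFDerivAt (fun p => ℓ p (u i)) (toDual ℝ (EuclideanSpace ℝ (Fin Du)) (G i)) (model θlim i) := by
      have := ((hosc (u i) (hu i) (model θlim i)).1).hasGradientAt
      rwa [hasGradientAt_iff_hasFDerivAt] at this
    exact h1.comp θlim ((hmodel i θlim).hasFDerivAt)
  have hLder : HasFDerivAt L
      ((1 / (N : ℝ)) • ∑ i, (toDual ℝ (EuclideanSpace ℝ (Fin Du)) (G i)).comp (D i)) θlim := by
    rw [hL]
    exact (HasFDerivAt.fun_sum (u := Finset.univ) fun i _ => hterm i).const_mul (1 / (N : ℝ))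
  have hsum0 : ((1 / (N : ℝ)) • ∑ i, (toDual ℝ (EuclideanSpace ℝ (Fin Du)) (G i)).comp (D i)) = 0 := by
    rw [← hLder.fderiv]
    exact hfd0
  -- surjectivity of the stacked Jacobian
  set J := fderiv ℝ (fun θ' => (fun i => model θ' i)) θlim with hJ
  have hJpi : J = ContinuousLinearMap.pi D :=
    fderiv_pi (fun i => (hmodel i).differentiableAt)
  have hsurj : Function.Surjective J := by
    have hfr : Module.finrank ℝ (LinearMap.range J.toLinearMap) = N * Du := by
      have h1 : (Module.finrank ℝ (LinearMap.range J.toLinearMap) : Cardinal)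
          = ((N * Du : ℕ) : Cardinal) := by
        rw [Module.finrank_eq_rank]
        exact hrank
      exact_mod_cast h1
    have hfr2 : Module.finrank ℝ (Fin N → EuclideanSpace ℝ (Fin Du)) = N * Du := by
      rw [Module.finrank_pi_fintype]
      simp only [finrank_euclideanSpace, Fintype.card_fin, Finset.sum_const,
        Finset.card_univ, smul_eq_mul]
    have htop : LinearMap.range J.toLinearMap = ⊤ :=
      Submodule.eq_top_of_finrank_eq (by rw [hfr, hfr2])
    intro y
    have : y ∈ LinearMap.range J.toLinearMap := htop ▸ Submodule.mem_top
    obtain ⟨v, hv⟩ := this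
    exact ⟨v, hv⟩
  obtain ⟨v, hv⟩ := hsurj G
  have hDv : ∀ i, D i v = G i := by
    intro i
    have := congrFun (hJpi ▸ hv) i
    simpa [ContinuousLinearMap.pi_apply] using this
  have hGzero : ∀ i, G i = 0 := by
    have happ := congrFun (congrArg DFunLike.coe hsum0) v
    simp only [ContinuousLinearMap.smul_apply, ContinuousLinearMap.coe_sum',
      Finset.sum_apply, ContinuousLinearMap.comp_apply,
      ContinuousLinearMap.zero_apply, smul_eq_mul] at happ
    have happ2 : (1 / (N : ℝ)) * ∑ i, ‖G i‖ ^ 2 = 0 := by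
      rw [← happ]
      congr 1
      apply Finset.sum_congr rfl
      intro i _
      rw [InnerProductSpace.toDual_apply_apply, hDv i, real_inner_self_eq_norm_sq]
    have hNne : (1 / (N : ℝ)) ≠ 0 := by
      simp
      positivity
    have hsum : ∑ i, ‖G i‖ ^ 2 = 0 := by
      rcases mul_eq_zero.1 happ2 with h | h
      · exact absurd h hNne
      · exact h
    intro i
    have hz : ‖G i‖ ^ 2 = 0 := by
      have := Finset.sum_eq_zero_iff_of_nonneg (fun j _ => sq_nonneg ‖G j‖) |>.1 hsum i
        (Finset.mem_univ i)
      exact this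
    have : ‖G i‖ = 0 := by
      nlinarith [norm_nonneg (G i)]
    rwa [norm_eq_zero] at this
  have hopt : ∀ i, ∀ q', ℓ (model θlim i) (u i) ≤ ℓ q' (u i) := by
    intro i
    exact (hosc (u i) (hu i) (model θlim i)).2 (hGzero i)
  intro θ'
  rw [hL]
  simp only
  apply mul_le_mul_of_nonneg_left _ (by positivity : (0:ℝ) ≤ 1 / (N : ℝ))
  exact Finset.sum_le_sum fun i _ => hopt i (model θ' i)
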